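/- Let (f_k)_{k≥1} be a sequence of positive real numbers with Σ_{k=1}^∞ f_k < 1, and let (u_n)_{n≥0} satisfy u_0 = 1 and the renewal equation u_n = Σ_{k=1}^n f_k u_{n−k} for all n ≥ 1. If there exist constants c₁ > 0 and α > 0 such that f_n ≤ c₁/n^{1+α} for all n ≥ 1, then there exists a constant c₂ > 0 (depending on the sequence (f_k)) such that u_n ≤ c₂/n^{1+α} for all n ≥ 1. -/

import Mathlib

set_option maxHeartbeats 1000000


/-- **Lemma (renewal sequence bound).** If `(f_k)_{k≥1}` are positive with `Σ_{k≥1} f_k < 1`,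
`u_0 = 1` and `u_n = Σ_{k=1}^n f_k u_{n−k}` for `n ≥ 1`, and `f_n ≤ c₁ / n^{1+α}` for all
`n ≥ 1`, then there is `c₂ > 0` with `u_n ≤ c₂ / n^{1+α}` for all `n ≥ 1`. -/
theorem renewal_sequence_bound (f : ℕ → ℝ) (hfpos : ∀ k : ℕ, 1 ≤ k → 0 < f k)
    (hsum : Summable fun k : ℕ => f (k + 1)) (hlt : ∑' k : ℕ, f (k + 1) < 1)
    (u : ℕ → ℝ) (hu0 : u 0 = 1)
    (hren : ∀ n : ℕ, 1 ≤ n → u n = ∑ k ∈ Finset.Icc 1 n, f k * u (n - k))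
    (c₁ α : ℝ) (hc₁ : 0 < c₁) (hα : 0 < α)
    (hfb : ∀ n : ℕ, 1 ≤ n → f n ≤ c₁ / (n : ℝ) ^ (1 + α)) :
    ∃ c₂ : ℝ, 0 < c₂ ∧ ∀ n : ℕ, 1 ≤ n → u n ≤ c₂ / (n : ℝ) ^ (1 + α) := by
  set q : ℝ := ∑' k : ℕ, f (k + 1) with hq_def
  have hexp : (0:ℝ) < 1 + α := by linarith
  have hq1 : q < 1 := hlt
  have hq0 : 0 < q :=
    lt_of_lt_of_le (hfpos 1 le_rfl)
      (Summable.le_tsum hsum 0 fun j _ => (hfpos (j + 1) (by omega)).le)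
  have h1q : 0 < 1 - q := by linarith
  -- nonnegativity of u
  have hu_nonneg : ∀ n, 0 ≤ u n := by
    intro n
    induction n using Nat.strong_induction_on with
    | _ n ih =>
      rcases Nat.eq_zero_or_pos n with h0 | h1
      · simp [h0, hu0]
      · rw [hren n h1]
        refine Finset.sum_nonneg fun k hk => ?_
        simp only [Finset.mem_Icc] at hk
        exact mul_nonneg (hfpos k hk.1).le (ih (n - k) (by omega))
  -- partial sums of f over Icc 1 M equal range sums and are ≤ q
  have hIccR : ∀ (g : ℕ → ℝ) (M : ℕ),
      ∑ k ∈ Finset.Icc 1 M, g k = ∑ i ∈ Finset.range M, g (1 + i) := by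
    intro g M
    rw [← Finset.Ico_add_one_right_eq_Icc, Finset.sum_Ico_eq_sum_range]
    congr 1
  have hpart : ∀ M : ℕ, ∑ k ∈ Finset.Icc 1 M, f k ≤ q := by
    intro M
    rw [hIccR f M]
    have : ∑ i ∈ Finset.range M, f (1 + i) = ∑ i ∈ Finset.range M, f (i + 1) :=
      Finset.sum_congr rfl fun i _ => by rw [add_comm]
    rw [this]
    exact Summable.sum_le_tsum (Finset.range M) (fun i _ => (hfpos (i + 1) (by omega)).le) hsum
  -- partial sums of u are bounded by 1/(1-q)
  have hS : ∀ M : ℕ, ∑ j ∈ Finset.range (M + 1), u j ≤ 1 / (1 - q) := by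
    intro M
    set SM := ∑ j ∈ Finset.range (M + 1), u j with hSM
    have hSMnn : 0 ≤ SM := Finset.sum_nonneg fun j _ => hu_nonneg j
    have h1 : SM = (∑ i ∈ Finset.range M, u (i + 1)) + u 0 := Finset.sum_range_succ' u M
    have h3 : ∑ i ∈ Finset.range M, u (i + 1) ≤ q * SM := by
      have h2 : ∑ i ∈ Finset.range M, u (i + 1)
          = ∑ i ∈ Finset.range M, ∑ k ∈ Finset.range (i + 1), f (1 + k) * u (i - k) := by
        refine Finset.sum_congr rfl fun i _ => ?_
        rw [hren (i + 1) (by omega), hIccR (fun k => f k * u (i + 1 - k)) (i + 1)]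
        refine Finset.sum_congr rfl fun k _ => ?_
        have : i + 1 - (1 + k) = i - k := by omega
        rw [this]
      rw [h2]
      have hswap : ∑ i ∈ Finset.range M, ∑ k ∈ Finset.range (i + 1), f (1 + k) * u (i - k)
          = ∑ k ∈ Finset.range M, ∑ i ∈ Finset.Icc k (M - 1), f (1 + k) * u (i - k) := by
        refine Finset.sum_comm' fun i k => ?_
        simp only [Finset.mem_range, Finset.mem_Icc]
        omega
      rw [hswap]
      calc ∑ k ∈ Finset.range M, ∑ i ∈ Finset.Icc k (M - 1), f (1 + k) * u (i - k)
          ≤ ∑ k ∈ Finset.range M, f (1 + k) * SM := by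
            refine Finset.sum_le_sum fun k hk => ?_
            rw [← Finset.mul_sum]
            refine mul_le_mul_of_nonneg_left ?_ (hfpos (1 + k) (by omega)).le
            have e1 : ∑ i ∈ Finset.Icc k (M - 1), u (i - k)
                = ∑ j ∈ Finset.range (M - 1 + 1 - k), u j := by
              rw [← Finset.Ico_add_one_right_eq_Icc, Finset.sum_Ico_eq_sum_range]
              refine Finset.sum_congr (by congr 1) fun j _ => by congr 1; omega
            rw [e1]
            refine Finset.sum_le_sum_of_subset_of_nonneg ?_ fun j _ _ => hu_nonneg j
            intro x hx
            simp only [Finset.mem_range] at *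
            omega
        _ ≤ q * SM := by
            rw [← Finset.sum_mul]
            refine mul_le_mul_of_nonneg_right ?_ hSMnn
            rw [← hIccR f M]
            exact hpart M
    have key : SM ≤ 1 + q * SM := by nth_rewrite 1 [h1]; rw [hu0]; linarith
    rw [le_div_iff₀ h1q]
    nlinarith [key]
  -- tails of f are small
  have htail : ∀ δ : ℝ, 0 < δ → ∃ m : ℕ, ∀ a b : ℕ, m ≤ a →
      ∑ k ∈ Finset.Ioc a b, f k ≤ δ := by
    intro δ hδ
    have htend := hsum.hasSum.tendsto_sum_nat
    have hev := htend.eventually (eventually_gt_nhds (show q - δ < q by linarith))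
    obtain ⟨m, hm⟩ := hev.exists
    refine ⟨m, fun a b ha => ?_⟩
    rcases le_or_gt a b with hab | hab
    · have e : (∑ k ∈ Finset.Ioc 0 a, f k) + ∑ k ∈ Finset.Ioc a b, f k
          = ∑ k ∈ Finset.Ioc 0 b, f k :=
        Finset.sum_Ioc_consecutive f (Nat.zero_le a) hab
      have e0 : ∀ M : ℕ, Finset.Ioc 0 M = Finset.Icc 1 M := by
        intro M; ext x; simp; omega
      rw [e0, e0] at e
      have h1 : ∑ k ∈ Finset.Icc 1 b, f k ≤ q := hpart b
      have h2 : q - δ ≤ ∑ k ∈ Finset.Icc 1 a, f k := by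
        have hma : ∑ k ∈ Finset.Icc 1 m, f k ≤ ∑ k ∈ Finset.Icc 1 a, f k := by
          refine Finset.sum_le_sum_of_subset_of_nonneg ?_
            (fun j hj _ => (hfpos j (Finset.mem_Icc.mp hj).1).le)
          exact Finset.Icc_subset_Icc le_rfl ha
        have : ∑ i ∈ Finset.range m, f (i + 1) = ∑ k ∈ Finset.Icc 1 m, f k := by
          rw [hIccR f m]
          exact Finset.sum_congr rfl fun i _ => by rw [add_comm]
        rw [this] at hm
        linarith
      linarith
    · rw [Finset.Ioc_eq_empty (by omega)]
      simp [hδ.le]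
  -- rpow helpers
  have hnpow_pos : ∀ n : ℕ, 1 ≤ n → (0:ℝ) < (n : ℝ) ^ (1 + α) := fun n hn =>
    Real.rpow_pos_of_pos (by exact_mod_cast hn) _
  have h2pos : (0:ℝ) < (2:ℝ) ^ (1 + α) := Real.rpow_pos_of_pos two_pos _
  have hdivhalf : ∀ C : ℝ, 0 ≤ C → ∀ j n : ℕ, 1 ≤ j → 1 ≤ n → (n : ℝ) ≤ 2 * j →
      C / (j : ℝ) ^ (1 + α) ≤ C * 2 ^ (1 + α) / (n : ℝ) ^ (1 + α) := by
    intro C hC j n hj hn hle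
    rw [div_le_div_iff₀ (hnpow_pos j hj) (hnpow_pos n hn)]
    have h1 : ((n : ℝ)) ^ (1 + α) ≤ (2 * (j:ℝ)) ^ (1 + α) :=
      Real.rpow_le_rpow (Nat.cast_nonneg n) hle hexp.le
    have h2 : ((2:ℝ) * (j:ℝ)) ^ (1 + α) = 2 ^ (1 + α) * (j:ℝ) ^ (1 + α) :=
      Real.mul_rpow (by norm_num) (Nat.cast_nonneg j)
    calc C * (n : ℝ) ^ (1 + α) ≤ C * (2 ^ (1 + α) * (j:ℝ) ^ (1 + α)) := by
          refine mul_le_mul_of_nonneg_left ?_ hC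
          rw [← h2]; exact h1
      _ = C * 2 ^ (1 + α) * (j:ℝ) ^ (1 + α) := by ring
  -- constants
  set δ : ℝ := (1 - q) / (4 * 2 ^ (1 + α)) with hδdef
  have hδpos : 0 < δ := div_pos h1q (by positivity)
  obtain ⟨m, hm⟩ := htail δ hδpos
  set δ' : ℝ := (1 - q) / (4 * q) with hδ'def
  have hδ'pos : 0 < δ' := div_pos h1q (by positivity)
  set β : ℝ := (1 + δ') ^ ((1 + α)⁻¹) with hβdef
  have hβ1 : 1 < β := by
    rw [hβdef, Real.one_lt_rpow_iff_of_pos (show (0:ℝ) < 1 + δ' by linarith)]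
    exact Or.inl ⟨by linarith, by positivity⟩
  have hβpow : β ^ (1 + α) = 1 + δ' := by
    rw [hβdef, ← Real.rpow_mul (by linarith : (0:ℝ) ≤ 1 + δ'),
      inv_mul_cancel₀ hexp.ne', Real.rpow_one]
  obtain ⟨N₀, hN₀⟩ := exists_nat_ge (β * m / (β - 1))
  have h5 : ∀ n : ℕ, N₀ ≤ n → m + 1 ≤ n →
      ((n : ℝ)) ^ (1 + α) ≤ (1 + δ') * ((n - m : ℕ) : ℝ) ^ (1 + α) := by
    intro n hn hmn
    have hcast : ((n - m : ℕ) : ℝ) = (n : ℝ) - m := by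
      rw [Nat.cast_sub (by omega)]
    have hmR : (m : ℝ) + 1 ≤ (n : ℝ) := by exact_mod_cast hmn
    have hβm : β * m / (β - 1) ≤ (n : ℝ) := le_trans hN₀ (by exact_mod_cast hn)
    have h6 : (n : ℝ) ≤ β * ((n : ℝ) - m) := by
      rw [div_le_iff₀ (by linarith)] at hβm
      nlinarith
    calc ((n : ℝ)) ^ (1 + α) ≤ (β * ((n : ℝ) - m)) ^ (1 + α) :=
          Real.rpow_le_rpow (Nat.cast_nonneg n) h6 hexp.le
      _ = β ^ (1 + α) * ((n : ℝ) - m) ^ (1 + α) :=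
          Real.mul_rpow (by linarith) (by linarith)
      _ = (1 + δ') * ((n - m : ℕ) : ℝ) ^ (1 + α) := by rw [hβpow, hcast]
  set N : ℕ := max N₀ (2 * m + 2) with hNdef
  set A : ℝ := c₁ * 2 ^ (1 + α) * (1 / (1 - q)) with hAdef
  have hApos : 0 < A := by positivity
  set C : ℝ := 2 * A / (1 - q) + (∑ j ∈ Finset.Icc 1 N, u j * (j : ℝ) ^ (1 + α)) + 1 with hCdef
  have hsumnn : 0 ≤ ∑ j ∈ Finset.Icc 1 N, u j * (j : ℝ) ^ (1 + α) :=
    Finset.sum_nonneg fun j _ => mul_nonneg (hu_nonneg j) (Real.rpow_nonneg (Nat.cast_nonneg j) _)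
  have hCApos : 0 < 2 * A / (1 - q) := div_pos (by linarith) h1q
  have hCpos : 0 < C := by rw [hCdef]; linarith
  have hCA : 2 * A / (1 - q) ≤ C := by rw [hCdef]; linarith
  have hCbase : ∀ j : ℕ, 1 ≤ j → j ≤ N → u j * (j : ℝ) ^ (1 + α) ≤ C := by
    intro j h1 h2
    have hj' : u j * (j : ℝ) ^ (1 + α) ≤ ∑ i ∈ Finset.Icc 1 N, u i * (i : ℝ) ^ (1 + α) :=
      Finset.single_le_sum
        (fun i _ => mul_nonneg (hu_nonneg i) (Real.rpow_nonneg (Nat.cast_nonneg i) _))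
        (Finset.mem_Icc.mpr ⟨h1, h2⟩)
    rw [hCdef]
    linarith
  clear_value q δ δ' β A C N
  refine ⟨C, hCpos, ?_⟩
  intro n
  induction n using Nat.strong_induction_on with
  | _ n ih =>
  intro hn1
  rcases le_or_gt n N with hcase | hcase
  · rw [le_div_iff₀ (hnpow_pos n hn1)]
    exact hCbase n hn1 hcase
  · have hNge : N₀ ≤ N ∧ 2 * m + 2 ≤ N := by
      rw [hNdef]
      exact ⟨le_max_left _ _, le_max_right _ _⟩
    have hnN₀ : N₀ ≤ n := le_trans hNge.1 hcase.le
    have hn2m : 2 * m + 2 ≤ n := le_trans hNge.2 hcase.le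
    have hh1 : m + 1 ≤ n / 2 := by omega
    have hh2 : n / 2 ≤ n := by omega
    have hnp := hnpow_pos n hn1
    -- split the renewal sum
    have hsplit : u n = (∑ k ∈ Finset.Ioc 0 m, f k * u (n - k))
        + (∑ k ∈ Finset.Ioc m (n / 2), f k * u (n - k))
        + (∑ k ∈ Finset.Ioc (n / 2) n, f k * u (n - k)) := by
      have e : Finset.Icc 1 n = Finset.Ioc 0 n := by ext x; simp; omega
      rw [hren n hn1, e,
        ← Finset.sum_Ioc_consecutive _ (Nat.zero_le (n / 2)) hh2,
        ← Finset.sum_Ioc_consecutive _ (Nat.zero_le m) (by omega : m ≤ n / 2)]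
    -- term 1
    have hT1 : ∑ k ∈ Finset.Ioc 0 m, f k * u (n - k)
        ≤ q * ((1 + δ') * C) / (n : ℝ) ^ (1 + α) := by
      have hX : (0:ℝ) ≤ (1 + δ') * C / (n : ℝ) ^ (1 + α) := by
        apply div_nonneg _ hnp.le
        exact mul_nonneg (by linarith) hCpos.le
      have hb : ∀ k ∈ Finset.Ioc 0 m, f k * u (n - k)
          ≤ f k * ((1 + δ') * C / (n : ℝ) ^ (1 + α)) := by
        intro k hk
        simp only [Finset.mem_Ioc] at hk
        have hnk1 : 1 ≤ n - k := by omega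
        have hIH : u (n - k) ≤ C / ((n - k : ℕ) : ℝ) ^ (1 + α) := ih _ (by omega) hnk1
        have hmono : C / ((n - k : ℕ) : ℝ) ^ (1 + α) ≤ C / ((n - m : ℕ) : ℝ) ^ (1 + α) := by
          apply div_le_div_of_nonneg_left hCpos.le (hnpow_pos (n - m) (by omega))
          exact Real.rpow_le_rpow (Nat.cast_nonneg _)
            (by exact_mod_cast (by omega : n - m ≤ n - k)) hexp.le
        have hmono2 : C / ((n - m : ℕ) : ℝ) ^ (1 + α) ≤ (1 + δ') * C / (n : ℝ) ^ (1 + α) := by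
          rw [div_le_div_iff₀ (hnpow_pos (n - m) (by omega)) hnp]
          have h5' := h5 n hnN₀ (by omega)
          calc C * (n : ℝ) ^ (1 + α) ≤ C * ((1 + δ') * ((n - m : ℕ) : ℝ) ^ (1 + α)) :=
                mul_le_mul_of_nonneg_left h5' hCpos.le
            _ = (1 + δ') * C * ((n - m : ℕ) : ℝ) ^ (1 + α) := by ring
        exact mul_le_mul_of_nonneg_left (le_trans hIH (le_trans hmono hmono2))
          (hfpos k hk.1).le
      calc ∑ k ∈ Finset.Ioc 0 m, f k * u (n - k)
          ≤ ∑ k ∈ Finset.Ioc 0 m, f k * ((1 + δ') * C / (n : ℝ) ^ (1 + α)) :=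
            Finset.sum_le_sum hb
        _ = (∑ k ∈ Finset.Ioc 0 m, f k) * ((1 + δ') * C / (n : ℝ) ^ (1 + α)) :=
            (Finset.sum_mul _ _ _).symm
        _ ≤ q * ((1 + δ') * C / (n : ℝ) ^ (1 + α)) := by
            refine mul_le_mul_of_nonneg_right ?_ hX
            have e0 : Finset.Ioc 0 m = Finset.Icc 1 m := by ext x; simp; omega
            rw [e0]; exact hpart m
        _ = q * ((1 + δ') * C) / (n : ℝ) ^ (1 + α) := by ring
    -- term 2
    have hT2 : ∑ k ∈ Finset.Ioc m (n / 2), f k * u (n - k)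
        ≤ δ * (C * 2 ^ (1 + α)) / (n : ℝ) ^ (1 + α) := by
      have hX : (0:ℝ) ≤ C * 2 ^ (1 + α) / (n : ℝ) ^ (1 + α) := by
        apply div_nonneg _ hnp.le
        exact mul_nonneg hCpos.le h2pos.le
      have hb : ∀ k ∈ Finset.Ioc m (n / 2), f k * u (n - k)
          ≤ f k * (C * 2 ^ (1 + α) / (n : ℝ) ^ (1 + α)) := by
        intro k hk
        simp only [Finset.mem_Ioc] at hk
        have hnk1 : 1 ≤ n - k := by omega
        have h2nk : (n : ℝ) ≤ 2 * ((n - k : ℕ) : ℝ) := by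
          exact_mod_cast (by omega : n ≤ 2 * (n - k))
        have hIH : u (n - k) ≤ C / ((n - k : ℕ) : ℝ) ^ (1 + α) := ih _ (by omega) hnk1
        have := hdivhalf C hCpos.le (n - k) n hnk1 hn1 h2nk
        exact mul_le_mul_of_nonneg_left (le_trans hIH this) (hfpos k (by omega)).le
      calc ∑ k ∈ Finset.Ioc m (n / 2), f k * u (n - k)
          ≤ ∑ k ∈ Finset.Ioc m (n / 2), f k * (C * 2 ^ (1 + α) / (n : ℝ) ^ (1 + α)) :=
            Finset.sum_le_sum hb
        _ = (∑ k ∈ Finset.Ioc m (n / 2), f k) * (C * 2 ^ (1 + α) / (n : ℝ) ^ (1 + α)) :=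
            (Finset.sum_mul _ _ _).symm
        _ ≤ δ * (C * 2 ^ (1 + α) / (n : ℝ) ^ (1 + α)) :=
            mul_le_mul_of_nonneg_right (hm m (n / 2) le_rfl) hX
        _ = δ * (C * 2 ^ (1 + α)) / (n : ℝ) ^ (1 + α) := by ring
    -- term 3
    have hT3 : ∑ k ∈ Finset.Ioc (n / 2) n, f k * u (n - k) ≤ A / (n : ℝ) ^ (1 + α) := by
      have hY : (0:ℝ) ≤ c₁ * 2 ^ (1 + α) / (n : ℝ) ^ (1 + α) := by positivity
      have hb : ∀ k ∈ Finset.Ioc (n / 2) n, f k * u (n - k)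
          ≤ c₁ * 2 ^ (1 + α) / (n : ℝ) ^ (1 + α) * u (n - k) := by
        intro k hk
        simp only [Finset.mem_Ioc] at hk
        have hk1 : 1 ≤ k := by omega
        have h2k : (n : ℝ) ≤ 2 * (k : ℝ) := by exact_mod_cast (by omega : n ≤ 2 * k)
        have hfk : f k ≤ c₁ * 2 ^ (1 + α) / (n : ℝ) ^ (1 + α) :=
          le_trans (hfb k hk1) (hdivhalf c₁ hc₁.le k n hk1 hn1 h2k)
        exact mul_le_mul_of_nonneg_right hfk (hu_nonneg _)
      have husum : ∑ k ∈ Finset.Ioc (n / 2) n, u (n - k) ≤ 1 / (1 - q) := by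
        have e : ∑ k ∈ Finset.Ioc (n / 2) n, u (n - k)
            = ∑ j ∈ Finset.range (n - n / 2), u (n - n / 2 - 1 - j) := by
          rw [show Finset.Ioc (n / 2) n = Finset.Ico (n / 2 + 1) (n + 1) by
              ext x; simp,
            Finset.sum_Ico_eq_sum_range,
            show n + 1 - (n / 2 + 1) = n - n / 2 by omega]
          exact Finset.sum_congr rfl fun j _ => by congr 1; omega
        rw [e, Finset.sum_range_reflect u (n - n / 2)]
        calc ∑ j ∈ Finset.range (n - n / 2), u j ≤ ∑ j ∈ Finset.range (n + 1), u j := by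
              refine Finset.sum_le_sum_of_subset_of_nonneg ?_ fun j _ _ => hu_nonneg j
              intro x hx
              simp only [Finset.mem_range] at *
              omega
          _ ≤ 1 / (1 - q) := hS n
      calc ∑ k ∈ Finset.Ioc (n / 2) n, f k * u (n - k)
          ≤ ∑ k ∈ Finset.Ioc (n / 2) n, c₁ * 2 ^ (1 + α) / (n : ℝ) ^ (1 + α) * u (n - k) :=
            Finset.sum_le_sum hb
        _ = c₁ * 2 ^ (1 + α) / (n : ℝ) ^ (1 + α) * ∑ k ∈ Finset.Ioc (n / 2) n, u (n - k) :=
            (Finset.mul_sum _ _ _).symm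
        _ ≤ c₁ * 2 ^ (1 + α) / (n : ℝ) ^ (1 + α) * (1 / (1 - q)) :=
            mul_le_mul_of_nonneg_left husum hY
        _ = A / (n : ℝ) ^ (1 + α) := by rw [hAdef]; ring
    -- combine
    have hfin : q * ((1 + δ') * C) + δ * (C * 2 ^ (1 + α)) + A ≤ C := by
      have hqne : q ≠ 0 := ne_of_gt hq0
      have e1 : q * δ' = (1 - q) / 4 := by
        rw [hδ'def]
        field_simp
      have e2 : δ * 2 ^ (1 + α) = (1 - q) / 4 := by
        rw [hδdef]
        field_simp
      have hA2 : 2 * A ≤ C * (1 - q) := by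
        rw [div_le_iff₀ h1q] at hCA
        linarith
      have expand : q * ((1 + δ') * C) + δ * (C * 2 ^ (1 + α)) + A
          = q * C + (q * δ') * C + (δ * 2 ^ (1 + α)) * C + A := by ring
      rw [expand, e1, e2]
      nlinarith
    rw [hsplit]
    have htot := add_le_add (add_le_add hT1 hT2) hT3
    refine le_trans htot ?_
    rw [← add_div, ← add_div]
    exact div_le_div_of_nonneg_right hfin hnp.le
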